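/- In the sequential uniform-random-partition process, the probability that player k+1 starts a new block, given a partial partition of the first k players into j blocks, equals the ratio of the number of partitions of N extending the partial partition with k+1 in a new block to the number extending it arbitrarily, and this ratio depends only on k and j, not on the partial partition itself; moreover this ratio is at least 1/|N|. -/

import Mathlib

open Finset

open scoped Classical

/-- A partition of the player set `Fin n`; following the paper's convention,
`∅` is a member of every partition. -/
def IsPartition {n : ℕ} (P : Finset (Finset (Fin n))) : Prop :=
  ∅ ∈ P ∧ ∀ a : Fin n, ∃! B : Finset (Fin n), B ∈ P ∧ a ∈ B

/-- The set `𝒫` of all partitions of `Fin n`. -/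
noncomputable def allPartitions (n : ℕ) : Finset (Finset (Finset (Fin n))) :=
  Finset.univ.filter IsPartition

/-- `C_i^π`: the set of players appearing after `i` in the ordering `π`. -/
def Cafter {n : ℕ} (π : Equiv.Perm (Fin n)) (i : Fin n) : Finset (Fin n) :=
  Finset.univ.filter fun j => π.symm i < π.symm j

/-- `P_{[S]}` : the partition obtained from `P` by merging all members of `S`
into a single coalition. -/
def pmerge {n : ℕ} (P : Finset (Finset (Fin n))) (S : Finset (Fin n)) :
    Finset (Finset (Fin n)) :=
  P.image (· \ S) ∪ {S}

/-- `τ_i^T(P)` : the partition obtained from `P` by transferring `i` from its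
coalition to the coalition `T` (taking `T = ∅` means that `i` forms a new
singleton coalition). -/
def moveTo {n : ℕ} (P : Finset (Finset (Fin n))) (i : Fin n) (T : Finset (Fin n)) :
    Finset (Finset (Fin n)) :=
  ((P.erase T).image fun B => B.erase i) ∪ {insert i T} ∪ {∅}

/-- A partition-function game: a real value for every (embedded) coalition. -/
abbrev Game (n : ℕ) := Finset (Fin n) → Finset (Finset (Fin n)) → ℝ

/-- A system of weights `α_i(S, P)` (meaningful for `i ∉ S`). -/
abbrev Weights (n : ℕ) := Fin n → Finset (Fin n) → Finset (Finset (Fin n)) → ℝ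

/-- The partition `{N, ∅}` in which the grand coalition is embedded. -/
def grandPart (n : ℕ) : Finset (Finset (Fin n)) := {Finset.univ, ∅}

/-- Normalization: for every embedded coalition `(S, P)` with `i ∈ S`,
`∑_{T ∈ P_{−S}} α_i(S_{−i}, τ_i^T(P)) = 1`. -/
def Normalized {n : ℕ} (w : Weights n) : Prop :=
  ∀ (i : Fin n) (S : Finset (Fin n)) (P : Finset (Finset (Fin n))),
    IsPartition P → S ∈ P → i ∈ S →
      ∑ T ∈ P.erase S, w i (S.erase i) (moveTo P i T) = 1

/-- Weights take values in `[0, 1]`. -/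
def InRange {n : ℕ} (w : Weights n) : Prop :=
  ∀ (i : Fin n) (S : Finset (Fin n)) (P : Finset (Finset (Fin n))),
    i ∉ S → 0 ≤ w i S P ∧ w i S P ≤ 1

/-- `pr^α_π(P) = ∏_{i ∈ N} α_i(C_i^π, P_{[C_i^π]})`. -/
noncomputable def pr {n : ℕ} (w : Weights n) (π : Equiv.Perm (Fin n))
    (P : Finset (Finset (Fin n))) : ℝ :=
  ∏ i : Fin n, w i (Cafter π i) (pmerge P (Cafter π i))

/-- The extended Shapley value `φ^α` (formula (1) of the paper). -/
noncomputable def esv {n : ℕ} (w : Weights n) (v : Game n) (i : Fin n) : ℝ :=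
  ((n.factorial : ℝ))⁻¹ * ∑ π : Equiv.Perm (Fin n), ∑ P ∈ allPartitions n,
    pr w π P *
      (v (insert i (Cafter π i)) (pmerge P (insert i (Cafter π i))) -
        v (Cafter π i) (pmerge P (Cafter π i)))

/-- The `α`-marginal contribution `[mc^α_i(v)](S, P)`. -/
noncomputable def mc {n : ℕ} (w : Weights n) (v : Game n) (i : Fin n)
    (S : Finset (Fin n)) (P : Finset (Finset (Fin n))) : ℝ :=
  ∑ T ∈ P.erase S, w i (S.erase i) (moveTo P i T) * (v S P - v (S.erase i) (moveTo P i T))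

/-- A genuine partition-function game: it vanishes off embedded coalitions
(and on the empty coalition). -/
def IsGame {n : ℕ} (v : Game n) : Prop :=
  ∀ S P, ¬ (IsPartition P ∧ S ∈ P ∧ S ≠ ∅) → v S P = 0

/-- The simple game `e^{(S₀, P₀)}`. -/
noncomputable def sgame {n : ℕ} (S₀ : Finset (Fin n)) (P₀ : Finset (Finset (Fin n))) :
    Game n :=
  fun S P => if S = S₀ ∧ P = P₀ then 1 else 0

/-- The permuted game `π(v)`, with `π(v)(S, P) = v(π(S), π(P))`. -/
def permGame {n : ℕ} (π : Equiv.Perm (Fin n)) (v : Game n) : Game n :=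
  fun S P => v (S.image π) (P.image (Finset.image π))

/-- A partial partition of the subset `K` of the players (with `∅` included,
as for full partitions). -/
def IsPartialPartition {n : ℕ} (K : Finset (Fin n)) (Q : Finset (Finset (Fin n))) :
    Prop :=
  ∅ ∈ Q ∧ (∀ B ∈ Q, B ⊆ K) ∧ ∀ a ∈ K, ∃! B, B ∈ Q ∧ a ∈ B

/-- The partitions of `N` that cover (restrict to) the partial partition `Q`
of `K`. -/
noncomputable def covers (n : ℕ) (K : Finset (Fin n)) (Q : Finset (Finset (Fin n))) :
    Finset (Finset (Finset (Fin n))) :=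
  (allPartitions n).filter fun P => P.image (· ∩ K) = Q
namespace Stmt17

/-- The count `D m j`: number of partitions extending `j` distinguished blocks
by `m` further elements. -/
def D : ℕ → ℕ → ℕ
  | 0, _ => 1
  | m+1, j => j * D m j + D m (j+1)

lemma D_succ (m j : ℕ) : D (m+1) j = j * D m j + D m (j+1) := rfl

lemma D_pos (m : ℕ) : ∀ j, 0 < D m j := by
  induction m with
  | zero => intro j; simp [D]
  | succ m ih => intro j; have := ih (j+1); simp [D]; omega

lemma D_mono (m : ℕ) : ∀ j, D m j ≤ D m (j+1) := by
  induction m with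
  | zero => intro j; simp [D]
  | succ m ih =>
    intro j
    have h1 := ih j
    have h2 := ih (j+1)
    have p := D_pos m (j+1)
    simp only [D]
    nlinarith [Nat.mul_le_mul_left j h1]

lemma D_succ_le (m j : ℕ) (hn : j + 1 ≤ nn) : D (m+1) j ≤ nn * D m (j+1) := by
  have h1 := D_mono m j
  have p := D_pos m (j+1)
  simp only [D]
  calc j * D m j + D m (j+1) ≤ j * D m (j+1) + D m (j+1) := by
        have := Nat.mul_le_mul_left j h1; omega
    _ = (j+1) * D m (j+1) := by ring
    _ ≤ nn * D m (j+1) := Nat.mul_le_mul_right _ hn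

end Stmt17
namespace Stmt17

variable {n : ℕ}

lemma pp_disj {K : Finset (Fin n)} {Q : Finset (Finset (Fin n))}
    (hQ : IsPartialPartition K Q) {B B' : Finset (Fin n)} (hB : B ∈ Q) (hB' : B' ∈ Q)
    (hne : B ≠ B') {x : Fin n} (hx : x ∈ B) (hx' : x ∈ B') : False := by
  obtain ⟨C, -, hu⟩ := hQ.2.2 x (hQ.2.1 B hB hx)
  exact hne ((hu B ⟨hB, hx⟩).trans (hu B' ⟨hB', hx'⟩).symm)

lemma part_disj {P : Finset (Finset (Fin n))} (hP : IsPartition P)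
    {B B' : Finset (Fin n)} (hB : B ∈ P) (hB' : B' ∈ P)
    (hne : B ≠ B') {x : Fin n} (hx : x ∈ B) (hx' : x ∈ B') : False := by
  obtain ⟨C, -, hu⟩ := hP.2 x
  exact hne ((hu B ⟨hB, hx⟩).trans (hu B' ⟨hB', hx'⟩).symm)

/-- Extend the partial partition `Q` by placing the new element `a` into block `B`
(a new singleton block if `B = ∅`). -/
def qext (a : Fin n) (Q : Finset (Finset (Fin n))) (B : Finset (Fin n)) :
    Finset (Finset (Fin n)) :=
  if B = ∅ then insert {a} Q else insert (insert a B) (Q.erase B)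

lemma qext_injOn {K : Finset (Fin n)} {Q : Finset (Finset (Fin n))}
    (hQ : IsPartialPartition K Q) {a : Fin n} (ha : a ∉ K)
    {B B' : Finset (Fin n)} (hB : B ∈ Q) (hB' : B' ∈ Q)
    (h : qext a Q B = qext a Q B') : B = B' := by
  have haB : ∀ C ∈ Q, a ∉ C := fun C hC hc => ha (hQ.2.1 C hC hc)
  -- key: from qext a Q B we can recover B as the block containing a, minus a
  have key : ∀ B ∈ Q, ∀ X ∈ qext a Q B, a ∈ X → X.erase a = B := by
    intro B hBm X hX haX
    unfold qext at hX
    split_ifs at hX with h0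
    · rcases Finset.mem_insert.1 hX with rfl | hXQ
      · simp [h0]
      · exact absurd haX (haB X hXQ)
    · rcases Finset.mem_insert.1 hX with rfl | hXQ
      · exact Finset.erase_insert (haB B hBm)
      · exact absurd haX (haB X (Finset.mem_of_mem_erase hXQ))
  have mem1 : (if B = ∅ then ({a} : Finset (Fin n)) else insert a B) ∈ qext a Q B := by
    unfold qext; split_ifs <;> simp
  have ha1 : a ∈ (if B = ∅ then ({a} : Finset (Fin n)) else insert a B) := by
    split_ifs <;> simp
  have e1 := key B hB _ mem1 ha1
  have e2 := key B' hB' _ (h ▸ mem1) ha1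
  exact e1.symm.trans e2

lemma qext_pp {K : Finset (Fin n)} {Q : Finset (Finset (Fin n))}
    (hQ : IsPartialPartition K Q) {a : Fin n} (ha : a ∉ K)
    {B : Finset (Fin n)} (hB : B ∈ Q) :
    IsPartialPartition (insert a K) (qext a Q B) := by
  obtain ⟨hemp, hsub, huniq⟩ := hQ
  have haB : ∀ C ∈ Q, a ∉ C := fun C hC hc => ha (hsub C hC hc)
  unfold qext
  split_ifs with h0
  · refine ⟨Finset.mem_insert_of_mem hemp, ?_, ?_⟩
    · intro C hC
      rcases Finset.mem_insert.1 hC with rfl | hCQ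
      · intro x hx; simp_all
      · exact (hsub C hCQ).trans (Finset.subset_insert _ _)
    · intro x hx
      rcases Finset.mem_insert.1 hx with rfl | hxK
      · refine ⟨{x}, ⟨Finset.mem_insert_self _ _, Finset.mem_singleton_self x⟩, ?_⟩
        rintro C ⟨hC, hxC⟩
        rcases Finset.mem_insert.1 hC with rfl | hCQ
        · rfl
        · exact absurd hxC (haB C hCQ)
      · obtain ⟨C, ⟨hCQ, hxC⟩, hu⟩ := huniq x hxK
        refine ⟨C, ⟨Finset.mem_insert_of_mem hCQ, hxC⟩, ?_⟩
        rintro C' ⟨hC', hxC'⟩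
        rcases Finset.mem_insert.1 hC' with rfl | hC'Q
        · exact absurd (Finset.mem_singleton.1 hxC') (fun h => ha (h ▸ hxK))
        · exact hu C' ⟨hC'Q, hxC'⟩
  · refine ⟨Finset.mem_insert_of_mem (Finset.mem_erase.2 ⟨fun h => h0 h.symm, hemp⟩), ?_, ?_⟩
    · intro C hC
      rcases Finset.mem_insert.1 hC with rfl | hCQ
      · exact Finset.insert_subset_insert a (hsub B hB)
      · exact (hsub C (Finset.mem_of_mem_erase hCQ)).trans (Finset.subset_insert _ _)
    · intro x hx
      rcases Finset.mem_insert.1 hx with rfl | hxK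
      · refine ⟨insert x B, ⟨Finset.mem_insert_self _ _, Finset.mem_insert_self _ _⟩, ?_⟩
        rintro C ⟨hC, hxC⟩
        rcases Finset.mem_insert.1 hC with rfl | hCQ
        · rfl
        · exact absurd hxC (haB C (Finset.mem_of_mem_erase hCQ))
      · obtain ⟨C, ⟨hCQ, hxC⟩, hu⟩ := huniq x hxK
        by_cases hCB : C = B
        · subst hCB
          refine ⟨insert a C, ⟨Finset.mem_insert_self _ _, Finset.mem_insert_of_mem hxC⟩, ?_⟩
          rintro C' ⟨hC', hxC'⟩
          rcases Finset.mem_insert.1 hC' with rfl | hC'Q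
          · rfl
          · exact absurd (hu C' ⟨Finset.mem_of_mem_erase hC'Q, hxC'⟩) (Finset.mem_erase.1 hC'Q).1
        · refine ⟨C, ⟨Finset.mem_insert_of_mem (Finset.mem_erase.2 ⟨hCB, hCQ⟩), hxC⟩, ?_⟩
          rintro C' ⟨hC', hxC'⟩
          rcases Finset.mem_insert.1 hC' with rfl | hC'Q
          · rcases Finset.mem_insert.1 hxC' with rfl | hxB
            · exact absurd hxK ha
            · exact absurd (hu B ⟨hB, hxB⟩).symm hCB
          · exact hu C' ⟨Finset.mem_of_mem_erase hC'Q, hxC'⟩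

lemma qext_card {K : Finset (Fin n)} {Q : Finset (Finset (Fin n))}
    (hQ : IsPartialPartition K Q) {a : Fin n} (ha : a ∉ K)
    {B : Finset (Fin n)} (hB : B ∈ Q) :
    (qext a Q B).card = if B = ∅ then Q.card + 1 else Q.card := by
  have haB : ∀ C ∈ Q, a ∉ C := fun C hC hc => ha (hQ.2.1 C hC hc)
  unfold qext
  split_ifs with h0
  · rw [Finset.card_insert_of_notMem]
    intro hmem
    exact haB _ hmem (Finset.mem_singleton_self a)
  · rw [Finset.card_insert_of_notMem, Finset.card_erase_of_mem hB]
    · have : 0 < Q.card := Finset.card_pos.2 ⟨B, hB⟩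
      omega
    · intro hmem
      exact haB _ (Finset.mem_of_mem_erase hmem) (Finset.mem_insert_self a B)

end Stmt17
namespace Stmt17

variable {n : ℕ}

lemma inter_insert_of_mem {C : Finset (Fin n)} {a : Fin n} (ha : a ∈ C) (K : Finset (Fin n)) :
    C ∩ insert a K = insert a (C ∩ K) := by
  ext x; simp only [Finset.mem_inter, Finset.mem_insert]
  constructor
  · rintro ⟨hx, rfl | hxK⟩
    · exact Or.inl rfl
    · exact Or.inr ⟨hx, hxK⟩
  · rintro (rfl | ⟨hx, hxK⟩)
    · exact ⟨ha, Or.inl rfl⟩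
    · exact ⟨hx, Or.inr hxK⟩

lemma inter_insert_of_not_mem {C : Finset (Fin n)} {a : Fin n} (ha : a ∉ C) (K : Finset (Fin n)) :
    C ∩ insert a K = C ∩ K := by
  ext x; simp only [Finset.mem_inter, Finset.mem_insert]
  constructor
  · rintro ⟨hx, rfl | hxK⟩
    · exact absurd hx ha
    · exact ⟨hx, hxK⟩
  · rintro ⟨hx, hxK⟩; exact ⟨hx, Or.inr hxK⟩

/-- Forward: if `P` covers `Q` on `K` and `C` is the block of `P` containing `a ∉ K`,
then `P` covers `qext a Q (C ∩ K)` on `insert a K`. -/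
lemma image_inter_insert {P : Finset (Finset (Fin n))} (hP : IsPartition P)
    {K : Finset (Fin n)} {Q : Finset (Finset (Fin n))} (hPQ : P.image (· ∩ K) = Q)
    {a : Fin n} (ha : a ∉ K) {C : Finset (Fin n)} (hC : C ∈ P) (haC : a ∈ C) :
    P.image (· ∩ insert a K) = qext a Q (C ∩ K) := by
  have hblock : ∀ Y ∈ P, a ∈ Y → Y = C := fun Y hY haY => by
    by_contra hne; exact part_disj hP hY hC hne haY haC
  ext X
  simp only [Finset.mem_image]
  constructor
  · rintro ⟨Y, hY, rfl⟩
    by_cases haY : a ∈ Y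
    · have : Y = C := hblock Y hY haY
      subst this
      rw [inter_insert_of_mem haY]
      unfold qext
      split_ifs with h0
      · rw [h0]; exact Finset.mem_insert_self _ _
      · exact Finset.mem_insert_self _ _
    · rw [inter_insert_of_not_mem haY]
      have hXQ : Y ∩ K ∈ Q := hPQ ▸ Finset.mem_image_of_mem _ hY
      unfold qext
      split_ifs with h0
      · exact Finset.mem_insert_of_mem hXQ
      · refine Finset.mem_insert_of_mem (Finset.mem_erase.2 ⟨?_, hXQ⟩)
        intro heq
        obtain ⟨b, hb⟩ := Finset.nonempty_iff_ne_empty.2 h0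
        have hbY : b ∈ Y := (Finset.mem_inter.1 (heq ▸ hb)).1
        have hbC : b ∈ C := (Finset.mem_inter.1 hb).1
        exact (fun hne => part_disj hP hY hC hne hbY hbC) (fun h => haY (h ▸ haC))
  · intro hX
    unfold qext at hX
    have hself : C ∩ insert a K = insert a (C ∩ K) := inter_insert_of_mem haC K
    split_ifs at hX with h0
    · rcases Finset.mem_insert.1 hX with rfl | hXQ
      · exact ⟨C, hC, by rw [hself, h0]; rfl⟩
      · obtain ⟨Y, hY, rfl⟩ := Finset.mem_image.1 (hPQ ▸ hXQ : X ∈ P.image (· ∩ K))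
        by_cases haY : a ∈ Y
        · have : Y = C := hblock Y hY haY
          subst this
          exact ⟨∅, hP.1, by rw [Finset.empty_inter, h0]⟩
        · exact ⟨Y, hY, (inter_insert_of_not_mem haY K)⟩
    · rcases Finset.mem_insert.1 hX with rfl | hXQ
      · exact ⟨C, hC, hself⟩
      · obtain ⟨hXne, hXQ'⟩ := Finset.mem_erase.1 hXQ
        obtain ⟨Y, hY, rfl⟩ := Finset.mem_image.1 (hPQ ▸ hXQ' : X ∈ P.image (· ∩ K))
        have haY : a ∉ Y := fun haY => hXne (by rw [hblock Y hY haY])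
        exact ⟨Y, hY, (inter_insert_of_not_mem haY K)⟩

/-- Backward: if `P` covers `qext a Q B` on `insert a K`, then `P` covers `Q` on `K`. -/
lemma image_inter_of_qext {P : Finset (Finset (Fin n))}
    {K : Finset (Fin n)} {Q : Finset (Finset (Fin n))}
    (hQ : IsPartialPartition K Q) {a : Fin n} (ha : a ∉ K)
    {B : Finset (Fin n)} (hB : B ∈ Q)
    (hPQ : P.image (· ∩ insert a K) = qext a Q B) :
    P.image (· ∩ K) = Q := by
  have haB : ∀ C ∈ Q, a ∉ C := fun C hC hc => ha (hQ.2.1 C hC hc)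
  have step : ∀ Y : Finset (Fin n), Y ∩ K = (Y ∩ insert a K).erase a := by
    intro Y; ext x
    simp only [Finset.mem_erase, Finset.mem_inter, Finset.mem_insert]
    constructor
    · rintro ⟨hx, hxK⟩
      exact ⟨fun h => ha (h ▸ hxK), hx, Or.inr hxK⟩
    · rintro ⟨hxa, hx, rfl | hxK⟩
      · exact absurd rfl hxa
      · exact ⟨hx, hxK⟩
  have : P.image (· ∩ K) = (P.image (· ∩ insert a K)).image (·.erase a) := by
    rw [Finset.image_image]
    exact Finset.image_congr (fun Y _ => step Y)
  rw [this, hPQ]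
  unfold qext
  have himQ : Q.image (·.erase a) = Q := by
    apply Finset.image_congr (g := id) (fun C hC => Finset.erase_eq_of_notMem (haB C hC)) |>.trans Finset.image_id
  split_ifs with h0
  · rw [Finset.image_insert, himQ, Finset.erase_singleton]
    rw [Finset.insert_eq_self.2 (h0 ▸ hB)]
  · rw [Finset.image_insert, Finset.erase_insert (haB B hB)]
    have : (Q.erase B).image (·.erase a) = Q.erase B := by
      apply Finset.image_congr (g := id) (fun C hC => Finset.erase_eq_of_notMem (haB C (Finset.mem_of_mem_erase hC))) |>.trans Finset.image_id
    rw [this, Finset.insert_erase hB]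

end Stmt17
namespace Stmt17

variable {n : ℕ}

lemma covers_biUnion {K : Finset (Fin n)} {Q : Finset (Finset (Fin n))}
    (hQ : IsPartialPartition K Q) {a : Fin n} (ha : a ∉ K) :
    covers n K Q = Q.biUnion (fun B => covers n (insert a K) (qext a Q B)) := by
  ext P
  simp only [covers, Finset.mem_biUnion, Finset.mem_filter, allPartitions, Finset.mem_univ,
    true_and]
  constructor
  · rintro ⟨hP, hPQ⟩
    obtain ⟨C, ⟨hC, haC⟩, -⟩ := hP.2 a
    have hBQ : C ∩ K ∈ Q := hPQ ▸ Finset.mem_image_of_mem _ hC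
    exact ⟨C ∩ K, hBQ, hP, image_inter_insert hP hPQ ha hC haC⟩
  · rintro ⟨B, hB, hP, hPQ⟩
    exact ⟨hP, image_inter_of_qext hQ ha hB hPQ⟩

lemma count_covers (m : ℕ) :
    ∀ (K : Finset (Fin n)) (Q : Finset (Finset (Fin n))), Kᶜ.card = m →
      IsPartialPartition K Q → (covers n K Q).card = D m (Q.card - 1) := by
  induction m with
  | zero =>
    intro K Q hm hQ
    have hK : K = Finset.univ := by
      have := Finset.card_eq_zero.1 hm
      simpa [Finset.compl_eq_empty_iff] using this
    subst hK
    have hQP : IsPartition Q := ⟨hQ.1, fun x => hQ.2.2 x (Finset.mem_univ x)⟩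
    have : covers n Finset.univ Q = {Q} := by
      ext P
      simp only [covers, allPartitions, Finset.mem_filter, Finset.mem_univ, true_and,
        Finset.mem_singleton, Finset.inter_univ, Finset.image_id']
      constructor
      · rintro ⟨-, rfl⟩; rfl
      · rintro rfl; exact ⟨hQP, rfl⟩
    rw [this]; simp [D]
  | succ m ih =>
    intro K Q hm hQ
    have hne : Kᶜ.Nonempty := Finset.card_pos.1 (by omega)
    obtain ⟨a, ha⟩ := hne
    have haK : a ∉ K := Finset.mem_compl.1 ha
    have hcompl : (insert a K)ᶜ.card = m := by
      rw [Finset.compl_insert, Finset.card_erase_of_mem ha, hm]; omega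

    rw [covers_biUnion hQ haK, Finset.card_biUnion]
    · have hQcard : 1 ≤ Q.card := Finset.card_pos.2 ⟨∅, hQ.1⟩
      have hsum : ∀ B ∈ Q, (covers n (insert a K) (qext a Q B)).card =
          if B = ∅ then D m Q.card else D m (Q.card - 1) := by
        intro B hB
        rw [ih _ _ hcompl (qext_pp hQ haK hB), qext_card hQ haK hB]
        split_ifs <;> congr 1 <;> omega
      rw [Finset.sum_congr rfl hsum]
      rw [← Finset.insert_erase hQ.1, Finset.sum_insert (Finset.notMem_erase _ _)]
      rw [if_pos rfl, Finset.insert_erase hQ.1]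
      have : ∀ B ∈ Q.erase ∅, (if B = ∅ then D m Q.card else D m (Q.card - 1)) =
          D m (Q.card - 1) := by
        intro B hB; rw [if_neg (Finset.mem_erase.1 hB).1]
      rw [Finset.sum_congr rfl this, Finset.sum_const, Finset.card_erase_of_mem hQ.1,
        smul_eq_mul]
      rw [D_succ]
      have h1 : Q.card - 1 + 1 = Q.card := by omega
      rw [h1]
      ring
    · intro B hB B' hB' hne
      apply Finset.disjoint_left.2
      intro P hP hP'
      simp only [covers, Finset.mem_filter] at hP hP'
      exact hne (qext_injOn hQ haK hB hB' (hP.2.symm.trans hP'.2))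

end Stmt17
namespace Stmt17

variable {n : ℕ}

lemma pp_blocks_le {K : Finset (Fin n)} {Q : Finset (Finset (Fin n))}
    (hQ : IsPartialPartition K Q) : Q.card - 1 ≤ K.card := by
  have hsub : (Q.erase ∅).biUnion id ⊆ K := by
    intro x hx
    obtain ⟨B, hB, hxB⟩ := Finset.mem_biUnion.1 hx
    exact hQ.2.1 B (Finset.mem_of_mem_erase hB) hxB
  have hdisj : ∀ B ∈ Q.erase ∅, ∀ B' ∈ Q.erase ∅, B ≠ B' → Disjoint (id B) (id B') := by
    intro B hB B' hB' hne
    apply Finset.disjoint_left.2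
    intro x hx hx'
    exact pp_disj hQ (Finset.mem_of_mem_erase hB) (Finset.mem_of_mem_erase hB') hne hx hx'
  have h1 : ((Q.erase ∅).biUnion id).card = ∑ B ∈ Q.erase ∅, B.card :=
    Finset.card_biUnion hdisj
  have h2 : (Q.erase ∅).card ≤ ∑ B ∈ Q.erase ∅, B.card := by
    calc (Q.erase ∅).card = ∑ _B ∈ Q.erase ∅, 1 := by simp
      _ ≤ ∑ B ∈ Q.erase ∅, B.card := by
          apply Finset.sum_le_sum
          intro B hB
          exact Finset.card_pos.2 (Finset.nonempty_iff_ne_empty.2 (Finset.mem_erase.1 hB).1)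
  calc Q.card - 1 = (Q.erase ∅).card := by rw [Finset.card_erase_of_mem hQ.1]
    _ ≤ ((Q.erase ∅).biUnion id).card := h2.trans_eq h1.symm
    _ ≤ K.card := Finset.card_le_card hsub

lemma insert_singleton_pp {K : Finset (Fin n)} {Q : Finset (Finset (Fin n))}
    (hQ : IsPartialPartition K Q) {a : Fin n} (ha : a ∉ K) :
    IsPartialPartition (insert a K) (insert {a} Q) := by
  have := qext_pp hQ ha hQ.1
  simpa [qext] using this

lemma insert_singleton_card {K : Finset (Fin n)} {Q : Finset (Finset (Fin n))}
    (hQ : IsPartialPartition K Q) {a : Fin n} (ha : a ∉ K) :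
    (insert {a} Q).card = Q.card + 1 := by
  have := qext_card hQ ha hQ.1
  simpa [qext] using this

end Stmt17

/-- In the sequential uniform-random-partition process: the number of
partitions of `N` covering a partial partition of the first `k` players
(and the number of those in which player `k+1` additionally starts a new
block) depends only on `k` and on the number `j` of blocks, not on the
partial partition itself; moreover the ratio, i.e. the probability that
player `k+1` starts a new block, is at least `1/n`. -/
theorem stmt17 (n k : ℕ) (hk : k < n)
    (Q : Finset (Finset (Fin n)))
    (hQ : IsPartialPartition (Finset.univ.filter fun a : Fin n => (a : ℕ) < k) Q) :
    (∀ Q', IsPartialPartition (Finset.univ.filter fun a : Fin n => (a : ℕ) < k) Q' →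
      Q'.card = Q.card →
        (covers n (Finset.univ.filter fun a : Fin n => (a : ℕ) < k) Q).card =
          (covers n (Finset.univ.filter fun a : Fin n => (a : ℕ) < k) Q').card ∧
        (covers n (insert ⟨k, hk⟩ (Finset.univ.filter fun a : Fin n => (a : ℕ) < k))
            (insert {⟨k, hk⟩} Q)).card =
          (covers n (insert ⟨k, hk⟩ (Finset.univ.filter fun a : Fin n => (a : ℕ) < k))
            (insert {⟨k, hk⟩} Q')).card) ∧
    (1 / (n : ℝ) ≤
      ((covers n (insert ⟨k, hk⟩ (Finset.univ.filter fun a : Fin n => (a : ℕ) < k))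
          (insert {⟨k, hk⟩} Q)).card : ℝ) /
        ((covers n (Finset.univ.filter fun a : Fin n => (a : ℕ) < k) Q).card : ℝ)) := by
  set K : Finset (Fin n) := Finset.univ.filter fun a : Fin n => (a : ℕ) < k with hKdef
  set a : Fin n := ⟨k, hk⟩ with hadef
  have haK : a ∉ K := by simp [hKdef, hadef]
  have hKcard : K.card = k := by
    have : K = Finset.Iio a := by
      ext x; simp [hKdef, hadef, Fin.lt_def]
    rw [this]
    simpa [hadef] using Fin.card_Iio a
  have hKc : Kᶜ.card = n - k := by
    rw [Finset.card_compl, hKcard]; simp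
  have hKc' : (insert a K)ᶜ.card = n - k - 1 := by
    rw [Finset.card_compl, Finset.card_insert_of_notMem haK, hKcard]; simp; omega
  have hQ1 : 1 ≤ Q.card := Finset.card_pos.2 ⟨∅, hQ.1⟩
  have hjk : Q.card - 1 ≤ k := hKcard ▸ Stmt17.pp_blocks_le hQ
  -- counts
  have count1 : ∀ Q'' : Finset (Finset (Fin n)), IsPartialPartition K Q'' →
      (covers n K Q'').card = Stmt17.D (n - k) (Q''.card - 1) := fun Q'' h =>
    Stmt17.count_covers (n - k) K Q'' hKc h
  have count2 : ∀ Q'' : Finset (Finset (Fin n)), IsPartialPartition K Q'' →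
      (covers n (insert a K) (insert {a} Q'')).card = Stmt17.D (n - k - 1) Q''.card := by
    intro Q'' h
    rw [Stmt17.count_covers (n - k - 1) _ _ hKc' (Stmt17.insert_singleton_pp h haK),
      Stmt17.insert_singleton_card h haK]
    simp
  constructor
  · intro Q' hQ' hcard
    refine ⟨?_, ?_⟩
    · rw [count1 Q hQ, count1 Q' hQ', hcard]
    · rw [count2 Q hQ, count2 Q' hQ', hcard]
  · rw [count1 Q hQ, count2 Q hQ]
    have hnat : Stmt17.D (n - k) (Q.card - 1) ≤ n * Stmt17.D (n - k - 1) Q.card := by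
      have h1 : n - k = (n - k - 1) + 1 := by omega
      rw [h1]
      have := Stmt17.D_succ_le (n - k - 1) (Q.card - 1) (nn := n) (by omega)
      have h2 : Q.card - 1 + 1 = Q.card := by omega
      rwa [h2] at this
    have hpos1 : (0:ℝ) < Stmt17.D (n - k) (Q.card - 1) := by
      exact_mod_cast Stmt17.D_pos (n - k) (Q.card - 1)
    have hposn : (0:ℝ) < n := Nat.cast_pos.2 (by omega)
    rw [div_le_div_iff₀ hposn hpos1]
    calc (1:ℝ) * Stmt17.D (n - k) (Q.card - 1) = Stmt17.D (n - k) (Q.card - 1) := one_mul _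
      _ ≤ (Stmt17.D (n - k - 1) Q.card : ℝ) * n := by exact_mod_cast hnat.trans_eq (Nat.mul_comm _ _)
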